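/- Fix a natural number n ≥ 1 and a real number p with 0 ≤ p ≤ 1 and p ≥ n^(-1 / C(n+1,2)), where C(·,·) denotes the binomial coefficient. Equip the space of functions f : Sym (Fin n) 3 → Bool with the product measure in which each coordinate is Bernoulli(p). Then the expected number of flexible atoms, i.e., the integral over f of the cardinality of { z : Fin n | for every s : Sym (Fin n) 3 with z ∈ s, f s = true }, is at least 1. -/

import Mathlib

open MeasureTheory

/-- The Bernoulli(p) measure on `Bool`: `true` with probability `p`,
`false` with probability `1 - p`. -/
noncomputable def bernoulliBool (p : ℝ) : Measure Bool :=
  p.toNNReal • Measure.dirac true + (1 - p).toNNReal • Measure.dirac false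

/-- The product measure on cycle assignments `Sym (Fin n) 3 → Bool` in which each
size-3 multiset of atoms (diversity cycle) is independently mandatory with probability `p`. -/
noncomputable def cycleMeasure (n : ℕ) (p : ℝ) : Measure (Sym (Fin n) 3 → Bool) :=
  Measure.pi fun _ => bernoulliBool p

lemma nnsmul_def (c : NNReal) (x : ENNReal) : c • x = ↑c * x := rfl

lemma bern_prob (p : ℝ) (hp0 : 0 ≤ p) (hp1 : p ≤ 1) :
    IsProbabilityMeasure (bernoulliBool p) := by
  constructor
  simp only [bernoulliBool, Measure.add_apply, Measure.smul_apply, Measure.dirac_apply_of_mem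
    (Set.mem_univ _), nnsmul_def, mul_one]
  rw [← ENNReal.coe_add, ← Real.toNNReal_add hp0 (by linarith)]
  norm_num

lemma bern_true (p : ℝ) : bernoulliBool p {true} = ENNReal.ofReal p := by
  simp [bernoulliBool, Measure.dirac_apply', nnsmul_def, ENNReal.ofReal]

lemma card_cycles (n : ℕ) (z : Fin n) :
    (Finset.univ.filter (fun s : Sym (Fin n) 3 => z ∈ s)).card = (n + 1).choose 2 := by
  have : (Finset.univ.filter (fun s : Sym (Fin n) 3 => z ∈ s)).card
      = (Finset.univ : Finset (Sym (Fin n) 2)).card := by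
    refine Finset.card_bij' (fun s hs => s.erase z (by simpa using hs))
      (fun t _ => z ::ₛ t) (fun s hs => Finset.mem_univ _)
      (fun t _ => by simp [Sym.mem_cons]) (fun s hs => Sym.cons_erase _)
      (fun t _ => Sym.erase_cons_head t z)
  rw [this, Finset.card_univ, Sym.card_sym_eq_multichoose, Nat.multichoose_eq, Fintype.card_fin]
  norm_num

lemma measure_Az (n : ℕ) (p : ℝ) (hp0 : 0 ≤ p) (hp1 : p ≤ 1) (z : Fin n) :
    cycleMeasure n p {f | ∀ s : Sym (Fin n) 3, z ∈ s → f s = true}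
      = ENNReal.ofReal p ^ (n + 1).choose 2 := by
  haveI := bern_prob p hp0 hp1
  have hset : {f : Sym (Fin n) 3 → Bool | ∀ s : Sym (Fin n) 3, z ∈ s → f s = true}
      = Set.univ.pi (fun s : Sym (Fin n) 3 =>
          if z ∈ s then ({true} : Set Bool) else Set.univ) := by
    ext f
    simp only [Set.mem_setOf_eq, Set.mem_pi, Set.mem_univ, true_implies]
    constructor
    · intro h s; split_ifs with hz <;> simp [h s, *]
    · intro h s hz; have := h s; rw [if_pos hz] at this; simpa using this
  rw [cycleMeasure, hset, Measure.pi_pi]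
  have : ∀ s : Sym (Fin n) 3, bernoulliBool p
      (if z ∈ s then ({true} : Set Bool) else Set.univ)
      = if z ∈ s then ENNReal.ofReal p else 1 := by
    intro s; split_ifs
    · exact bern_true p
    · exact measure_univ
  simp only [this]
  rw [Finset.prod_ite, Finset.prod_const, Finset.prod_const, one_pow, mul_one, card_cycles]


theorem stmt9 (n : ℕ) (hn : 1 ≤ n) (p : ℝ) (hp0 : 0 ≤ p) (hp1 : p ≤ 1)
    (hp : p ≥ (n : ℝ) ^ (-1 / ((n + 1).choose 2 : ℝ))) :
    1 ≤ ∫ f : Sym (Fin n) 3 → Bool,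
        ((Finset.univ.filter fun z : Fin n =>
            ∀ s : Sym (Fin n) 3, z ∈ s → f s = true).card : ℝ)
        ∂(cycleMeasure n p) := by
  haveI := bern_prob p hp0 hp1
  haveI : IsProbabilityMeasure (cycleMeasure n p) :=
    MeasureTheory.Measure.pi.instIsProbabilityMeasure _
  set K := (n + 1).choose 2 with hK
  have hKpos : 0 < K := Nat.choose_pos (by omega)
  -- measurability of the events
  have hmeas : ∀ z : Fin n,
      MeasurableSet {f : Sym (Fin n) 3 → Bool | ∀ s : Sym (Fin n) 3, z ∈ s → f s = true} := by
    intro z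
    have : {f : Sym (Fin n) 3 → Bool | ∀ s : Sym (Fin n) 3, z ∈ s → f s = true}
        = ⋂ s : Sym (Fin n) 3, ⋂ _ : z ∈ s, (fun f : Sym (Fin n) 3 → Bool => f s) ⁻¹' {true} := by
      ext f; simp
    rw [this]
    exact MeasurableSet.iInter fun s => MeasurableSet.iInter fun _ =>
      (measurable_pi_apply s) (measurableSet_singleton true)
  -- rewrite the integrand as a sum of indicators
  have hrw : ∀ f : Sym (Fin n) 3 → Bool,
      ((Finset.univ.filter fun z : Fin n =>
          ∀ s : Sym (Fin n) 3, z ∈ s → f s = true).card : ℝ)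
      = ∑ z : Fin n,
          ({f : Sym (Fin n) 3 → Bool | ∀ s : Sym (Fin n) 3, z ∈ s → f s = true}).indicator
            (1 : (Sym (Fin n) 3 → Bool) → ℝ) f := by
    intro f
    rw [Finset.card_filter]
    push_cast
    refine Finset.sum_congr rfl fun z _ => ?_
    by_cases h : ∀ s : Sym (Fin n) 3, z ∈ s → f s = true <;>
      simp [Set.indicator, h]
  calc (1 : ℝ) ≤ ∑ z : Fin n,
        ((cycleMeasure n p)
          {f : Sym (Fin n) 3 → Bool | ∀ s : Sym (Fin n) 3, z ∈ s → f s = true}).toReal := by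
        have hmz : ∀ z : Fin n,
            ((cycleMeasure n p)
              {f : Sym (Fin n) 3 → Bool | ∀ s : Sym (Fin n) 3, z ∈ s → f s = true}).toReal
            = p ^ K := by
          intro z
          rw [measure_Az n p hp0 hp1 z, ENNReal.toReal_pow, ENNReal.toReal_ofReal hp0]
        simp only [hmz, Finset.sum_const, Finset.card_univ, Fintype.card_fin, nsmul_eq_mul]
        -- 1 ≤ n * p ^ K
        have hnpos : (0:ℝ) < n := by exact_mod_cast hn
        have hbase : (0:ℝ) ≤ (n : ℝ) ^ (-1 / (K : ℝ)) := Real.rpow_nonneg hnpos.le _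
        have hpow : ((n : ℝ) ^ (-1 / (K : ℝ))) ^ K ≤ p ^ K :=
          pow_le_pow_left₀ hbase hp K
        have heq : ((n : ℝ) ^ (-1 / (K : ℝ))) ^ K = (n : ℝ)⁻¹ := by
          rw [← Real.rpow_natCast ((n : ℝ) ^ (-1 / (K : ℝ))) K, ← Real.rpow_mul hnpos.le]
          have : -1 / (K : ℝ) * K = -1 := by
            field_simp
          rw [this, Real.rpow_neg_one]
        rw [heq] at hpow
        calc (1:ℝ) = n * (n:ℝ)⁻¹ := by field_simp
          _ ≤ n * p ^ K := by
            exact mul_le_mul_of_nonneg_left hpow hnpos.le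
    _ = ∑ z : Fin n, ∫ f : Sym (Fin n) 3 → Bool,
          ({f : Sym (Fin n) 3 → Bool | ∀ s : Sym (Fin n) 3, z ∈ s → f s = true}).indicator
            (1 : (Sym (Fin n) 3 → Bool) → ℝ) f ∂(cycleMeasure n p) := by
        refine Finset.sum_congr rfl fun z _ => ?_
        rw [MeasureTheory.integral_indicator_one (hmeas z)]
        rfl
    _ = ∫ f : Sym (Fin n) 3 → Bool,
          ∑ z : Fin n,
            ({f : Sym (Fin n) 3 → Bool | ∀ s : Sym (Fin n) 3, z ∈ s → f s = true}).indicator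
              (1 : (Sym (Fin n) 3 → Bool) → ℝ) f ∂(cycleMeasure n p) := by
        rw [MeasureTheory.integral_finset_sum]
        intro z _
        exact Integrable.of_finite
    _ = _ := by
        refine integral_congr_ae (Filter.Eventually.of_forall fun f => ?_)
        exact (hrw f).symm
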